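/- Let $P$ be a self-adjoint operator on $L^2$ with spectrum contained in $(a, 1]$ for some $a > -1$, and $\Delta = I - P$. Then for every integer $t \ge 0$ there is a constant $C$ such that for every $k \ge 1$ and $h \in L^2$, $\frac{1}{k}\sum_{l=1}^{k} l^{2(1+t)}\|(I + k\Delta)^{1/2}\Delta^{1+t}P^{l-1}h\|_{L^2}^2 \le C\|h\|_{L^2}^2$. -/

import Mathlib

open Polynomial ContinuousLinearMap

namespace Stmt16

variable {H : Type*} [NormedAddCommGroup H] [InnerProductSpace ℝ H] [CompleteSpace H]

local notation "⟪" x ", " y "⟫" => @inner ℝ H _ x y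

lemma pow_succ_sub_le (m l : ℕ) :
    ((l : ℝ) + 1) ^ (m + 1) - (l : ℝ) ^ (m + 1) ≤ ((m : ℝ) + 1) * ((l : ℝ) + 1) ^ m := by
  induction m with
  | zero => simp
  | succ m ih =>
    have hl : (0 : ℝ) ≤ l := Nat.cast_nonneg l
    have e : ((l:ℝ)+1)^(m+2) - (l:ℝ)^(m+2)
        = ((l:ℝ)+1)^(m+1) + (l:ℝ)*(((l:ℝ)+1)^(m+1) - (l:ℝ)^(m+1)) := by ring
    have hstep : (l:ℝ)*(((l:ℝ)+1)^(m+1) - (l:ℝ)^(m+1)) ≤ ((m:ℝ)+1) * ((l:ℝ)+1)^(m+1) := by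
      calc (l:ℝ)*(((l:ℝ)+1)^(m+1) - (l:ℝ)^(m+1))
          ≤ (l:ℝ) * (((m:ℝ)+1) * ((l:ℝ)+1)^m) := mul_le_mul_of_nonneg_left ih hl
        _ ≤ ((m:ℝ)+1) * ((l:ℝ)+1)^(m+1) := by
            have h1 : (0:ℝ) ≤ ((l:ℝ)+1)^m := pow_nonneg (by linarith) m
            have hp : ((l:ℝ)+1)^(m+1) = ((l:ℝ)+1)^m * ((l:ℝ)+1) := pow_succ _ _
            nlinarith
    push_cast
    have e' : ((l:ℝ)+1)^(m+1+1) - (l:ℝ)^(m+1+1)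
        = ((l:ℝ)+1)^(m+1) + (l:ℝ)*(((l:ℝ)+1)^(m+1) - (l:ℝ)^(m+1)) := e
    linarith [e', hstep]

lemma sum_bound (m : ℕ) : ∀ {u : ℝ}, 0 ≤ u → u ≤ 1 → ∀ k : ℕ,
    (1 - u) ^ (m + 1) * ∑ l ∈ Finset.range k, ((l : ℝ) + 1) ^ m * u ^ l
      ≤ (m.factorial : ℝ) := by
  induction m with
  | zero =>
    intro u h0 h1 k
    have hsum : ∑ l ∈ Finset.range k, ((l : ℝ) + 1) ^ 0 * u ^ l
        = ∑ l ∈ Finset.range k, u ^ l := by simp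
    have hgeom : (1 - u) * ∑ l ∈ Finset.range k, u ^ l = 1 - u ^ k := by
      linear_combination -geom_sum_mul u k
    have huk : 0 ≤ u ^ k := pow_nonneg h0 k
    rw [hsum, pow_one, hgeom]
    norm_num; linarith
  | succ m ih =>
    intro u h0 h1 k
    have key : (1 - u) * ∑ l ∈ Finset.range k, ((l : ℝ) + 1) ^ (m+1) * u ^ l
        ≤ ((m : ℝ) + 1) * ∑ l ∈ Finset.range k, ((l : ℝ) + 1) ^ m * u ^ l := by
      have e1 : ∑ l ∈ Finset.range k, ((l : ℝ) + 1) ^ (m+1) * u ^ (l+1)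
          = ∑ l ∈ Finset.range k, (l : ℝ) ^ (m+1) * u ^ l + (k : ℝ) ^ (m+1) * u ^ k := by
        have h1' := Finset.sum_range_succ (fun j => (j : ℝ) ^ (m+1) * u ^ j) k
        have h2' := Finset.sum_range_succ' (fun j => (j : ℝ) ^ (m+1) * u ^ j) k
        push_cast at h1' h2'
        rw [h1'] at h2'
        simp only [zero_pow (Nat.succ_ne_zero m), zero_mul, add_zero] at h2'
        linarith
      have expand : (1 - u) * ∑ l ∈ Finset.range k, ((l : ℝ) + 1) ^ (m+1) * u ^ l
          = (∑ l ∈ Finset.range k, ((l : ℝ) + 1) ^ (m+1) * u ^ l)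
            - ∑ l ∈ Finset.range k, ((l : ℝ) + 1) ^ (m+1) * u ^ (l+1) := by
        rw [sub_mul, one_mul, Finset.mul_sum]
        congr 1
        apply Finset.sum_congr rfl
        intro l _; ring
      have e3 : ∑ l ∈ Finset.range k, (((l : ℝ) + 1) ^ (m+1) - (l : ℝ) ^ (m+1)) * u ^ l
          ≤ ((m : ℝ) + 1) * ∑ l ∈ Finset.range k, ((l : ℝ) + 1) ^ m * u ^ l := by
        rw [Finset.mul_sum]
        apply Finset.sum_le_sum
        intro l _
        have h := pow_succ_sub_le m l
        have hu : 0 ≤ u ^ l := pow_nonneg h0 l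
        calc (((l : ℝ) + 1) ^ (m+1) - (l : ℝ) ^ (m+1)) * u ^ l
            ≤ (((m : ℝ)+1) * ((l : ℝ)+1)^m) * u ^ l := mul_le_mul_of_nonneg_right h hu
          _ = ((m : ℝ)+1) * (((l : ℝ)+1)^m * u ^ l) := by ring
      have esub : ∑ l ∈ Finset.range k, (((l : ℝ) + 1) ^ (m+1) - (l : ℝ) ^ (m+1)) * u ^ l
          = (∑ l ∈ Finset.range k, ((l : ℝ) + 1) ^ (m+1) * u ^ l)
            - ∑ l ∈ Finset.range k, (l : ℝ) ^ (m+1) * u ^ l := by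
        rw [← Finset.sum_sub_distrib]
        apply Finset.sum_congr rfl
        intro l _; ring
      have hk : (0:ℝ) ≤ (k : ℝ) ^ (m+1) * u ^ k := by positivity
      rw [expand, e1]
      linarith [e3, esub]
    have h1u : 0 ≤ (1 - u) ^ (m + 1) := pow_nonneg (by linarith) _
    have hsumnn : 0 ≤ ∑ l ∈ Finset.range k, ((l : ℝ) + 1) ^ m * u ^ l := by
      apply Finset.sum_nonneg; intro l _; positivity
    calc (1 - u) ^ (m + 1 + 1) * ∑ l ∈ Finset.range k, ((l : ℝ) + 1) ^ (m+1) * u ^ l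
        = (1 - u) ^ (m + 1) * ((1 - u) * ∑ l ∈ Finset.range k, ((l : ℝ) + 1) ^ (m+1) * u ^ l) := by
          ring
      _ ≤ (1 - u) ^ (m + 1) * (((m : ℝ) + 1) * ∑ l ∈ Finset.range k, ((l : ℝ) + 1) ^ m * u ^ l) :=
          mul_le_mul_of_nonneg_left key h1u
      _ = ((m : ℝ) + 1) * ((1 - u) ^ (m + 1) * ∑ l ∈ Finset.range k, ((l : ℝ) + 1) ^ m * u ^ l) := by
          ring
      _ ≤ ((m : ℝ) + 1) * (m.factorial : ℝ) :=
          mul_le_mul_of_nonneg_left (ih h0 h1 k) (by positivity)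
      _ = ((m+1).factorial : ℝ) := by
          rw [Nat.factorial_succ]; push_cast; ring

lemma scalar_bound (t k : ℕ) (hk : 1 ≤ k) {a x : ℝ} (ha : -1 < a) (ha0 : a ≤ 0)
    (hx : x ∈ Set.Icc a 1) :
    (1 / (k:ℝ)) * ∑ l ∈ Finset.Icc 1 k, (l : ℝ) ^ (2 * (1 + t)) *
        ((1 + (k:ℝ) * (1 - x)) * ((1 - x) ^ (1 + t) * x ^ (l - 1)) ^ 2)
      ≤ ((2*t+1).factorial : ℝ) / (1 + a) ^ (2*t+2)
        + ((2*t+2).factorial : ℝ) / (1 + a) ^ (2*t+3) := by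
  obtain ⟨hax, hx1⟩ := hx
  set m : ℕ := 2*t+2 with hm
  have hε : (0:ℝ) < 1 + a := by linarith
  set y : ℝ := 1 - x with hy
  set u : ℝ := x^2 with hu
  have hy0 : 0 ≤ y := by simp [hy]; linarith
  have hu0 : 0 ≤ u := sq_nonneg x
  have hxabs : |x| ≤ 1 := abs_le.mpr ⟨by linarith, hx1⟩
  have hu1 : u ≤ 1 := (sq_le_one_iff_abs_le_one x).mpr hxabs
  have hεy : (1 + a) * y ≤ 1 - u := by
    have h' : 1 - u = y * (1 + x) := by rw [hu, hy]; ring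
    rw [h']
    have : 1 + a ≤ 1 + x := by linarith
    nlinarith
  have hknn : (0:ℝ) < k := by exact_mod_cast hk
  set S : ℝ := ∑ i ∈ Finset.range k, ((i : ℝ) + 1) ^ m * (y ^ m * u ^ i) with hS
  set T1 : ℝ := ∑ i ∈ Finset.range k, ((i : ℝ) + 1) ^ (2*t+1) * u ^ i with hT1
  set T2 : ℝ := ∑ i ∈ Finset.range k, ((i : ℝ) + 1) ^ m * u ^ i with hT2
  have hT1nn : 0 ≤ T1 := Finset.sum_nonneg fun i _ => by positivity
  have hT2nn : 0 ≤ T2 := Finset.sum_nonneg fun i _ => by positivity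
  have hreindex : ∑ l ∈ Finset.Icc 1 k, (l : ℝ) ^ (2 * (1 + t)) *
        ((1 + (k:ℝ) * y) * (y ^ (1 + t) * x ^ (l - 1)) ^ 2)
      = ∑ i ∈ Finset.range k, ((i : ℝ) + 1) ^ m *
        ((1 + (k:ℝ) * y) * (y ^ m * u ^ i)) := by
    rw [← Finset.Ico_add_one_right_eq_Icc, Finset.sum_Ico_eq_sum_range]
    have hk1 : k + 1 - 1 = k := by omega
    rw [hk1]
    apply Finset.sum_congr rfl
    intro i _
    have h1 : ((1 + i : ℕ) : ℝ) = (i : ℝ) + 1 := by push_cast; ring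
    have h2 : (1 + i) - 1 = i := by omega
    have h3 : (y ^ (1 + t) * x ^ i) ^ 2 = y ^ m * u ^ i := by
      rw [mul_pow, ← pow_mul, ← pow_mul, hu, ← pow_mul]
      congr 1
      · congr 1; omega
      · rw [Nat.mul_comm 2 i]
    rw [h1, h2, h3]
    congr 1
    · congr 1; omega
  rw [hreindex]
  have hsplit : ∑ i ∈ Finset.range k, ((i : ℝ) + 1) ^ m *
        ((1 + (k:ℝ) * y) * (y ^ m * u ^ i)) = S + (k:ℝ) * y * S := by
    rw [hS, Finset.mul_sum, ← Finset.sum_add_distrib]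
    apply Finset.sum_congr rfl
    intro i _; ring
  rw [hsplit, mul_add]
  have hSfact : S = y ^ m * T2 := by
    rw [hS, hT2, Finset.mul_sum]
    apply Finset.sum_congr rfl
    intro i _; ring
  -- part 1 : (1/k) * S ≤ (2t+1)! / (1+a)^(2t+2)
  have hpart1 : (1 / (k:ℝ)) * S ≤ ((2*t+1).factorial : ℝ) / (1 + a) ^ (2*t+2) := by
    have step : (1 / (k:ℝ)) * S ≤ y ^ m * T1 := by
      rw [hS, hT1, Finset.mul_sum, Finset.mul_sum]
      apply Finset.sum_le_sum
      intro i hi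
      have hik : (i:ℝ) + 1 ≤ (k:ℝ) := by
        exact_mod_cast Nat.succ_le_of_lt (Finset.mem_range.mp hi)
      have e : ((i : ℝ) + 1) ^ m = ((i : ℝ) + 1) ^ (2*t+1) * ((i:ℝ)+1) := by
        rw [hm, ← pow_succ]
      rw [e]
      rw [div_mul_eq_mul_div, one_mul, div_le_iff₀ hknn]
      calc ((i : ℝ) + 1) ^ (2*t+1) * ((i:ℝ)+1) * (y ^ m * u ^ i)
          = (((i : ℝ) + 1) ^ (2*t+1) * (y ^ m * u ^ i)) * ((i:ℝ)+1) := by ring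
        _ ≤ (((i : ℝ) + 1) ^ (2*t+1) * (y ^ m * u ^ i)) * (k:ℝ) :=
            mul_le_mul_of_nonneg_left hik (by positivity)
        _ = y ^ m * (((i:ℝ)+1)^(2*t+1) * u ^ i) * (k:ℝ) := by ring
    refine step.trans ?_
    rw [le_div_iff₀ (by positivity)]
    have hq : y ^ m * T1 * (1+a)^(2*t+2) = ((1+a)*y)^m * T1 := by
      rw [hm, mul_pow]; ring
    calc y ^ m * T1 * (1+a)^(2*t+2) = ((1+a)*y)^m * T1 := hq
      _ ≤ (1-u)^m * T1 :=
          mul_le_mul_of_nonneg_right (pow_le_pow_left₀ (by positivity) hεy m) hT1nn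
      _ ≤ ((2*t+1).factorial : ℝ) := by
          have hm2 : m = 2*t+1+1 := by omega
          rw [hm2]; exact sum_bound (2*t+1) hu0 hu1 k
  -- part 2 : (1/k) * (k*y*S) = y*S ≤ (2t+2)! / (1+a)^(2t+3)
  have hBeq : (1 / (k:ℝ)) * ((k:ℝ) * y * S) = y * S := by
    field_simp
  have hpart2 : y * S ≤ ((2*t+2).factorial : ℝ) / (1 + a) ^ (2*t+3) := by
    rw [hSfact, le_div_iff₀ (by positivity)]
    have hq : y * (y ^ m * T2) * (1+a)^(2*t+3) = ((1+a)*y)^(m+1) * T2 := by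
      rw [mul_pow]
      have : (1+a)^(2*t+3) = (1+a)^(m+1) := by rw [hm]
      rw [this, pow_succ, pow_succ]; ring
    calc y * (y ^ m * T2) * (1+a)^(2*t+3) = ((1+a)*y)^(m+1) * T2 := hq
      _ ≤ (1-u)^(m+1) * T2 :=
          mul_le_mul_of_nonneg_right (pow_le_pow_left₀ (by positivity) hεy (m+1)) hT2nn
      _ ≤ ((2*t+2).factorial : ℝ) := by
          have hm2 : (m:ℕ) = 2*t+2 := hm
          rw [hm2] at *
          exact sum_bound (2*t+2) hu0 hu1 k
  rw [hBeq]
  linarith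

/-- Cauchy–Schwarz-type inequality for positive operators. -/
lemma norm_apply_sq_le {S : H →L[ℝ] H} (hsa : IsSelfAdjoint S)
    (hpos : ∀ x : H, 0 ≤ ⟪S x, x⟫) (x : H) :
    ‖S x‖ ^ 2 ≤ ‖S‖ * ⟪S x, x⟫ := by
  rcases eq_or_lt_of_le (norm_nonneg S) with hS0 | hS0
  · have hS : S = 0 := by rw [← norm_le_zero_iff, ← hS0]
    simp [hS]
  · have ht : (0:ℝ) < ‖S‖ := hS0
    set t : ℝ := ‖S‖⁻¹ with htdef
    have h1 := hpos (x - t • S x)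
    have hadj : ∀ u v : H, ⟪S u, v⟫ = ⟪u, S v⟫ := by
      intro u v
      nth_rewrite 1 [← (isSelfAdjoint_iff'.mp hsa)]
      exact adjoint_inner_left S v u
    have hexp : ⟪S (x - t • S x), x - t • S x⟫
        = ⟪S x, x⟫ - 2 * t * ‖S x‖ ^ 2 + t ^ 2 * ⟪S (S x), S x⟫ := by
      rw [map_sub, map_smul]
      simp only [inner_sub_left, inner_sub_right, inner_smul_left, inner_smul_right,
        RCLike.conj_to_real]
      have h2 : ⟪S x, S x⟫ = ‖S x‖ ^ 2 := real_inner_self_eq_norm_sq _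
      have h3 : ⟪S (S x), x⟫ = ⟪S x, S x⟫ := by rw [hadj]
      rw [h3, h2]
      ring
    have hSS : ⟪S (S x), S x⟫ ≤ ‖S‖ * ‖S x‖ ^ 2 := by
      calc ⟪S (S x), S x⟫ ≤ ‖S (S x)‖ * ‖S x‖ := real_inner_le_norm _ _
        _ ≤ (‖S‖ * ‖S x‖) * ‖S x‖ := by
            apply mul_le_mul_of_nonneg_right (S.le_opNorm _) (norm_nonneg _)
        _ = ‖S‖ * ‖S x‖ ^ 2 := by ring
    have htS : t * ‖S‖ = 1 := inv_mul_cancel₀ (ne_of_gt ht)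
    have ht0 : 0 ≤ t := le_of_lt (inv_pos.mpr ht)
    have h6 : t^2 * ⟪S (S x), S x⟫ ≤ t^2 * (‖S‖ * ‖S x‖^2) :=
      mul_le_mul_of_nonneg_left hSS (sq_nonneg t)
    have h7 : t^2 * (‖S‖ * ‖S x‖^2) = t * ‖S x‖^2 := by
      have : t^2 * ‖S‖ = t := by rw [sq, mul_assoc, htS, mul_one]
      rw [← mul_assoc, this]
    have h8 : t * ‖S x‖^2 ≤ ⟪S x, x⟫ := by
      rw [hexp] at h1; linarith
    have h9 := mul_le_mul_of_nonneg_left h8 (norm_nonneg S)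
    have h10 : ‖S‖ * (t * ‖S x‖^2) = ‖S x‖^2 := by
      rw [← mul_assoc, mul_comm ‖S‖ t, htS, one_mul]
    linarith

/-- A selfadjoint operator with nonnegative real spectrum has nonnegative quadratic form. -/
lemma inner_nonneg_of_spectrum_nonneg {T : H →L[ℝ] H} (hT : IsSelfAdjoint T)
    (hs : ∀ μ ∈ spectrum ℝ T, (0:ℝ) ≤ μ) (x : H) : 0 ≤ ⟪T x, x⟫ := by
  by_contra hneg
  push_neg at hneg
  have hx0 : x ≠ 0 := by rintro rfl; simp at hneg
  set Q : Set ℝ := (fun y : H => ⟪T y, y⟫) '' {y : H | ‖y‖ = 1} with hQ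
  have hQne : Q.Nonempty := by
    refine ⟨⟪T (‖x‖⁻¹ • x), ‖x‖⁻¹ • x⟫, ⟨‖x‖⁻¹ • x, ?_, rfl⟩⟩
    simp [norm_smul, abs_of_nonneg, inv_mul_cancel₀ (norm_ne_zero_iff.mpr hx0)]
  have hQbdd : BddBelow Q := by
    refine ⟨-‖T‖, ?_⟩
    rintro r ⟨y, hy, rfl⟩
    have h1 : |⟪T y, y⟫| ≤ ‖T y‖ * ‖y‖ := abs_real_inner_le_norm _ _
    have h2 : ‖T y‖ ≤ ‖T‖ * ‖y‖ := T.le_opNorm y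
    have hy1 : ‖y‖ = 1 := hy
    rw [hy1] at h1 h2
    simp at h1 h2
    have := neg_abs_le (⟪T y, y⟫)
    linarith
  set β : ℝ := sInf Q with hβ
  have hβneg : β < 0 := by
    have hmem : ⟪T (‖x‖⁻¹ • x), ‖x‖⁻¹ • x⟫ ∈ Q := by
      refine ⟨‖x‖⁻¹ • x, ?_, rfl⟩
      simp [norm_smul, abs_of_nonneg, inv_mul_cancel₀ (norm_ne_zero_iff.mpr hx0)]
    have hle := csInf_le hQbdd hmem
    have hval : ⟪T (‖x‖⁻¹ • x), ‖x‖⁻¹ • x⟫ = ‖x‖⁻¹ ^ 2 * ⟪T x, x⟫ := by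
      rw [map_smul, inner_smul_left, inner_smul_right, RCLike.conj_to_real]; ring
    have : ⟪T (‖x‖⁻¹ • x), ‖x‖⁻¹ • x⟫ < 0 := by
      rw [hval]
      apply mul_neg_of_pos_of_neg _ hneg
      have := norm_pos_iff.mpr hx0
      positivity
    linarith
  set S : H →L[ℝ] H := T - β • 1 with hSdef
  have hSsa : IsSelfAdjoint S := by
    apply hT.sub
    exact IsSelfAdjoint.smul (star_trivial β) (IsSelfAdjoint.one (H →L[ℝ] H))
  have hSapply : ∀ y : H, S y = T y - β • y := by intro y; simp [hSdef]
  have hSform : ∀ y : H, ⟪S y, y⟫ = ⟪T y, y⟫ - β * ‖y‖ ^ 2 := by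
    intro y
    rw [hSapply, inner_sub_left, inner_smul_left, RCLike.conj_to_real,
      real_inner_self_eq_norm_sq]
  have hSpos : ∀ y : H, 0 ≤ ⟪S y, y⟫ := by
    intro y
    rcases eq_or_ne y 0 with rfl | hy0
    · simp
    · have hy1 : ‖(‖y‖⁻¹ • y)‖ = 1 := by
        simp [norm_smul, abs_of_nonneg, inv_mul_cancel₀ (norm_ne_zero_iff.mpr hy0)]
      have hmem : ⟪T (‖y‖⁻¹ • y), ‖y‖⁻¹ • y⟫ ∈ Q := ⟨_, hy1, rfl⟩
      have hge := csInf_le hQbdd hmem  -- β ≤ value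
      have hval : ⟪T (‖y‖⁻¹ • y), ‖y‖⁻¹ • y⟫ = ‖y‖⁻¹ ^ 2 * ⟪T y, y⟫ := by
        rw [map_smul, inner_smul_left, inner_smul_right, RCLike.conj_to_real]; ring
      rw [hSform]
      have hyn : (0:ℝ) < ‖y‖ := norm_pos_iff.mpr hy0
      rw [hval] at hge
      have h2 : β * ‖y‖^2 ≤ ⟪T y, y⟫ := by
        have := mul_le_mul_of_nonneg_left hge (by positivity : (0:ℝ) ≤ ‖y‖^2)
        have hinv : ‖y‖^2 * (‖y‖⁻¹^2 * ⟪T y, y⟫) = ⟪T y, y⟫ := by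
          field_simp
        rw [hinv] at this
        linarith
      linarith
  -- β ∈ spectrum
  have hβspec : β ∈ spectrum ℝ T := by
    rw [spectrum.mem_iff]
    intro hunit
    have hSunit : IsUnit S := by
      have : algebraMap ℝ (H →L[ℝ] H) β - T = -S := by
        rw [hSdef, Algebra.algebraMap_eq_smul_one]; abel
      rw [this] at hunit
      exact (IsUnit.neg_iff _).mp hunit
    obtain ⟨v, hv⟩ := hSunit
    set c : ℝ := ‖((v⁻¹ : (H →L[ℝ] H)ˣ) : H →L[ℝ] H)‖ with hc
    have hlow : ∀ y : H, ‖y‖ ≤ c * ‖S y‖ := by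
      intro y
      have hiv : ((v⁻¹ : (H →L[ℝ] H)ˣ) : H →L[ℝ] H) (S y) = y := by
        rw [← hv]
        have h := congrArg (fun A : H →L[ℝ] H => A y) v.inv_mul
        simpa only [ContinuousLinearMap.mul_apply, ContinuousLinearMap.one_apply] using h
      calc ‖y‖ = ‖((v⁻¹ : (H →L[ℝ] H)ˣ) : H →L[ℝ] H) (S y)‖ := by rw [hiv]
        _ ≤ c * ‖S y‖ := le_opNorm _ _
    -- pick y with small quadratic form
    have hc0 : 0 < c := by
      rcases hQne with ⟨r, y, hy, rfl⟩
      have h1 := hlow y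
      rw [hy] at h1
      by_contra hc'
      push_neg at hc' -- c ≤ 0
      have : c * ‖S y‖ ≤ 0 := mul_nonpos_of_nonpos_of_nonneg hc' (norm_nonneg _)
      linarith
    have hδ : (0:ℝ) < 1 / (c^2 * (‖S‖ + 1)) := by positivity
    obtain ⟨r, hrQ, hrlt⟩ := exists_lt_of_csInf_lt hQne (by linarith : sInf Q < β + 1 / (c^2 * (‖S‖+1)))
    obtain ⟨y, hy1, rfl⟩ := hrQ
    have hform : ⟪S y, y⟫ < 1 / (c^2 * (‖S‖+1)) := by
      rw [hSform, hy1]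
      simp only [one_pow, mul_one]
      linarith
    have hCS := norm_apply_sq_le hSsa hSpos y
    have h1 := hlow y
    rw [hy1] at h1
    -- 1 ≤ c^2 ‖S y‖^2 ≤ c^2 ‖S‖ ⟪Sy,y⟫ < c^2 ‖S‖ / (c^2 (‖S‖+1)) < 1
    have h2 : 1 ≤ c^2 * ‖S y‖^2 := by nlinarith [norm_nonneg (S y)]
    have h3 : c^2 * ‖S y‖^2 ≤ c^2 * (‖S‖ * ⟪S y, y⟫) :=
      mul_le_mul_of_nonneg_left hCS (by positivity)
    have hSnn : (0:ℝ) ≤ ‖S‖ := norm_nonneg _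
    have h4 : c^2 * (‖S‖ * ⟪S y, y⟫) < c^2 * (‖S‖ + 1) * (1 / (c^2 * (‖S‖+1))) := by
      have hf : ⟪S y, y⟫ < 1 / (c^2 * (‖S‖+1)) := hform
      have hform0 : 0 ≤ ⟪S y, y⟫ := hSpos y
      have : ‖S‖ * ⟪S y, y⟫ < (‖S‖ + 1) * (1 / (c^2 * (‖S‖+1))) := by
        calc ‖S‖ * ⟪S y, y⟫ ≤ ‖S‖ * (1 / (c^2 * (‖S‖+1))) := by
              apply mul_le_mul_of_nonneg_left (le_of_lt hf) hSnn
          _ < (‖S‖ + 1) * (1 / (c^2 * (‖S‖+1))) := by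
              apply mul_lt_mul_of_pos_right _ hδ
              linarith
      calc c^2 * (‖S‖ * ⟪S y, y⟫) < c^2 * ((‖S‖ + 1) * (1 / (c^2 * (‖S‖+1)))) := by
            apply mul_lt_mul_of_pos_left this (by positivity)
        _ = c^2 * (‖S‖ + 1) * (1 / (c^2 * (‖S‖+1))) := by ring
    have h5 : c^2 * (‖S‖ + 1) * (1 / (c^2 * (‖S‖+1))) = 1 := by
      field_simp
    linarith
  exact absurd (hs β hβspec) (not_le.mpr hβneg)

lemma isSelfAdjoint_aeval {T : H →L[ℝ] H} (hT : IsSelfAdjoint T) (q : ℝ[X]) :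
    IsSelfAdjoint (aeval T q) := by
  induction q using Polynomial.induction_on' with
  | add p q hp hq => rw [map_add]; exact hp.add hq
  | monomial n c =>
    rw [aeval_monomial]
    rw [← Algebra.smul_def]
    exact IsSelfAdjoint.smul (star_trivial c) (hT.pow n)

/-- `(T-α)^2 + β^2` is invertible for selfadjoint `T` and `β ≠ 0`. -/
lemma isUnit_quadratic {T : H →L[ℝ] H} (hT : IsSelfAdjoint T) (α β : ℝ) (hβ : β ≠ 0) :
    IsUnit (aeval T (X ^ 2 - C (2 * α) * X + C (α ^ 2 + β ^ 2))) := by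
  set A := aeval T (X ^ 2 - C (2 * α) * X + C (α ^ 2 + β ^ 2)) with hA
  have hβ2 : (0:ℝ) < β ^ 2 := by positivity
  apply isUnit_of_forall_le_norm_inner_map A (c := ⟨β^2, le_of_lt hβ2⟩) (by exact_mod_cast hβ2)
  intro x
  have hadj : ∀ u v : H, ⟪T u, v⟫ = ⟪u, T v⟫ := by
    intro u v
    nth_rewrite 1 [← (isSelfAdjoint_iff'.mp hT)]
    exact adjoint_inner_left T v u
  have hAx : A x = T (T x) - (2*α) • T x + (α^2+β^2) • x := by
    rw [hA]
    simp only [map_add, map_sub, map_mul, aeval_X, aeval_C, map_pow]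
    simp [Algebra.smul_def, pow_two, mul_apply]
    rw [smul_smul, smul_smul, smul_smul, ← add_smul]
    norm_num
    module
  have hform : ⟪A x, x⟫ = ‖T x - α • x‖^2 + β^2 * ‖x‖^2 := by
    rw [hAx]
    rw [inner_add_left, inner_sub_left, inner_smul_left, inner_smul_left, RCLike.conj_to_real,
      RCLike.conj_to_real]
    have h1 : ⟪T (T x), x⟫ = ‖T x‖^2 := by
      rw [hadj]; exact real_inner_self_eq_norm_sq _
    have h2 : ‖T x - α • x‖^2 = ‖T x‖^2 - 2*α*⟪T x, x⟫ + α^2 * ‖x‖^2 := by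
      rw [norm_sub_sq_real, norm_smul, real_inner_smul_right]
      simp [norm_smul]
      ring_nf
      rw [sq_abs]
    rw [h1, real_inner_self_eq_norm_sq]
    rw [h2]; ring
  have hger : ⟪A x, x⟫ ≥ β^2 * ‖x‖^2 := by
    rw [hform]; nlinarith [sq_nonneg (‖T x - α • x‖)]
  have hnn : 0 ≤ ⟪A x, x⟫ := le_trans (by positivity) hger
  calc ‖x‖^2 * (⟨β^2, le_of_lt hβ2⟩ : NNReal) = β^2 * ‖x‖^2 := by
        simp [NNReal.coe_mk]; ring
    _ ≤ ⟪A x, x⟫ := hger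
    _ ≤ ‖⟪A x, x⟫‖ := le_abs_self _
/-- If a real polynomial has no roots in the spectrum of a selfadjoint operator,
then its evaluation is invertible. -/
lemma isUnit_aeval_of_no_root {T : H →L[ℝ] H} (hT : IsSelfAdjoint T) :
    ∀ (q : ℝ[X]), q ≠ 0 → (∀ μ ∈ spectrum ℝ T, q.eval μ ≠ 0) → IsUnit (aeval T q) := by
  have main : ∀ n : ℕ, ∀ q : ℝ[X], q.natDegree = n → q ≠ 0 →
      (∀ μ ∈ spectrum ℝ T, q.eval μ ≠ 0) → IsUnit (aeval T q) := by
    intro n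
    induction n using Nat.strong_induction_on with
    | _ n ih =>
      intro q hdeg hq0 hroots
      rcases Nat.eq_zero_or_pos n with hn0 | hnpos
      · -- constant polynomial
        subst hn0
        obtain ⟨c, rfl⟩ := Polynomial.natDegree_eq_zero.mp hdeg
        have hc : c ≠ 0 := fun h => hq0 (by rw [h, map_zero])
        rw [aeval_C]
        exact (isUnit_iff_ne_zero.mpr hc).map (algebraMap ℝ (H →L[ℝ] H))
      · -- positive degree: find a complex root
        have hdegpos : q.degree ≠ 0 := by
          rw [Polynomial.degree_eq_natDegree hq0, hdeg]
          exact_mod_cast Nat.pos_iff_ne_zero.mp hnpos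
        obtain ⟨z, hz⟩ := Complex.exists_root (f := q.map (algebraMap ℝ ℂ)) (by
          rw [Polynomial.degree_map_eq_of_injective (algebraMap ℝ ℂ).injective]
          rw [Polynomial.degree_eq_natDegree hq0, hdeg]
          exact_mod_cast hnpos)
        have hzaeval : aeval z q = 0 := by
          rw [aeval_def, ← Polynomial.eval_map]
          exact hz
        rcases eq_or_ne z.im 0 with him | him
        · -- real root r
          set r : ℝ := z.re with hr
          have hzr : (r : ℂ) = z := by
            apply Complex.ext <;> simp [hr, him.symm]
          have hqr : q.eval r = 0 := by
            have h := aeval_algebraMap_apply_eq_algebraMap_eval (A := ℂ) r q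
            rw [Complex.coe_algebraMap] at h
            rw [hzr, hzaeval] at h
            have h' : ((q.eval r : ℝ) : ℂ) = 0 := by
              rw [← Complex.coe_algebraMap]; exact h.symm
            exact_mod_cast h'
          have hrspec : r ∉ spectrum ℝ T := fun hmem => hroots r hmem hqr
          obtain ⟨q₁, hq₁⟩ := (dvd_iff_isRoot.mpr hqr : (X - C r) ∣ q)
          have hq₁0 : q₁ ≠ 0 := by rintro rfl; rw [mul_zero] at hq₁; exact hq0 hq₁
          have hXr : (X - C r : ℝ[X]) ≠ 0 := X_sub_C_ne_zero r
          have hdeg₁ : q₁.natDegree < n := by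
            have := Polynomial.natDegree_mul hXr hq₁0
            rw [← hq₁, Polynomial.natDegree_X_sub_C] at this
            omega
          have hroots₁ : ∀ μ ∈ spectrum ℝ T, q₁.eval μ ≠ 0 := by
            intro μ hμ hcontra
            apply hroots μ hμ
            rw [hq₁, eval_mul, hcontra, mul_zero]
          have hu₁ : IsUnit (aeval T q₁) := ih _ hdeg₁ q₁ rfl hq₁0 hroots₁
          have huX : IsUnit (aeval T (X - C r)) := by
            have hsp := spectrum.notMem_iff.mp hrspec
            have : aeval T (X - C r) = -(algebraMap ℝ (H →L[ℝ] H) r - T) := by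
              rw [map_sub, aeval_X, aeval_C]; abel
            rw [this]
            exact hsp.neg
          rw [hq₁, map_mul]
          exact huX.mul hu₁
        · -- complex root: quadratic factor
          have hdvd := q.quadratic_dvd_of_aeval_eq_zero_im_ne_zero hzaeval him
          set u : ℝ[X] := X ^ 2 - C (2 * z.re) * X + C (‖z‖ ^ 2) with hu
          obtain ⟨q₂, hq₂⟩ := hdvd
          have hudeg : u.natDegree = 2 := by
            rw [hu]; compute_degree!
          have hu0 : u ≠ 0 := by
            intro h
            rw [h] at hudeg
            simp at hudeg
          have hq₂0 : q₂ ≠ 0 := by rintro rfl; rw [mul_zero] at hq₂; exact hq0 hq₂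
          have hdeg₂ : q₂.natDegree < n := by
            have := Polynomial.natDegree_mul hu0 hq₂0
            rw [← hq₂, hudeg] at this
            omega
          have hroots₂ : ∀ μ ∈ spectrum ℝ T, q₂.eval μ ≠ 0 := by
            intro μ hμ hcontra
            apply hroots μ hμ
            rw [hq₂, eval_mul, hcontra, mul_zero]
          have hu₂ : IsUnit (aeval T q₂) := ih _ hdeg₂ q₂ rfl hq₂0 hroots₂
          have huu : IsUnit (aeval T u) := by
            have hnorm : ‖z‖ ^ 2 = z.re ^ 2 + z.im ^ 2 := by
              rw [Complex.sq_norm, Complex.normSq_apply]; ring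
            rw [hu, hnorm]
            exact isUnit_quadratic hT z.re z.im him
          rw [hq₂, map_mul]
          exact huu.mul hu₂
  intro q hq0 hroots
  exact main q.natDegree q rfl hq0 hroots

/-- Key quadratic form bound from a pointwise bound of the polynomial on a superset
of the spectrum. -/
lemma inner_aeval_le {P : H →L[ℝ] H} (hP : IsSelfAdjoint P) {S : Set ℝ} (hSne : S.Nonempty)
    (hspec : spectrum ℝ P ⊆ S) (g : ℝ[X]) (Cb : ℝ) (hg : ∀ x ∈ S, g.eval x ≤ Cb) (h : H) :
    ⟪aeval P g h, h⟫ ≤ Cb * ‖h‖ ^ 2 := by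
  set T : H →L[ℝ] H := aeval P (Polynomial.C Cb - g) with hTdef
  have hTsa : IsSelfAdjoint T := isSelfAdjoint_aeval hP _
  have hTspec : ∀ μ ∈ spectrum ℝ T, (0:ℝ) ≤ μ := by
    intro μ hμ
    rw [spectrum.mem_iff] at hμ
    have heq : algebraMap ℝ (H →L[ℝ] H) μ - T = aeval P (g - Polynomial.C (Cb - μ)) := by
      rw [hTdef]
      simp only [map_sub, aeval_C]
      abel
    rw [heq] at hμ
    set w : ℝ[X] := g - Polynomial.C (Cb - μ) with hwdef
    by_cases hw : w = 0
    · have hgconst : g = Polynomial.C (Cb - μ) := by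
        have := sub_eq_zero.mp hw
        exact this
      obtain ⟨x₀, hx₀⟩ := hSne
      have := hg x₀ hx₀
      rw [hgconst, eval_C] at this
      linarith
    · by_contra hμneg
      push_neg at hμneg
      apply hμ
      apply isUnit_aeval_of_no_root hP w hw
      intro lam hlam hc
      have hlamS := hspec hlam
      have hb := hg lam hlamS
      rw [hwdef, eval_sub, eval_C] at hc
      have : g.eval lam = Cb - μ := by linarith
      linarith
  have hpos := inner_nonneg_of_spectrum_nonneg hTsa hTspec h
  have hTh : T h = Cb • h - aeval P g h := by
    rw [hTdef, map_sub, aeval_C, Algebra.algebraMap_eq_smul_one]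
    simp
  rw [hTh, inner_sub_left, real_inner_smul_left, real_inner_self_eq_norm_sq] at hpos
  linarith

/-- moving a selfadjoint factor across the inner product -/
lemma inner_term_eq {P : H →L[ℝ] H} (hP : IsSelfAdjoint P) (M p : ℝ[X]) (h : H) :
    ⟪(aeval P M * aeval P p) h, (aeval P p) h⟫ = ⟪aeval P (M * p ^ 2) h, h⟫ := by
  have hpsa : IsSelfAdjoint (aeval P p) := isSelfAdjoint_aeval hP p
  have hadj : ∀ u v : H, ⟪(aeval P p) u, v⟫ = ⟪u, (aeval P p) v⟫ := by
    intro u v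
    nth_rewrite 1 [← (isSelfAdjoint_iff'.mp hpsa)]
    exact adjoint_inner_left _ v u
  calc ⟪(aeval P M * aeval P p) h, (aeval P p) h⟫
      = ⟪(aeval P p) ((aeval P M * aeval P p) h), h⟫ := (hadj _ _).symm
    _ = ⟪(aeval P p * (aeval P M * aeval P p)) h, h⟫ := rfl
    _ = ⟪aeval P (p * (M * p)) h, h⟫ := by rw [map_mul, map_mul]
    _ = ⟪aeval P (M * p ^ 2) h, h⟫ := by rw [show p * (M * p) = M * p ^ 2 by ring]

end Stmt16



open Polynomial ContinuousLinearMap Stmt16 in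
/-- For `P` self-adjoint on `L²` with spectrum in `(a, 1]`, `a > -1`, and `Δ = I - P`,
for every `t ∈ ℕ` there is `C` with
`(1/k) ∑_{l=1}^k l^{2(1+t)} ‖(I + kΔ)^{1/2} Δ^{1+t} P^{l-1} h‖² ≤ C ‖h‖²`,
the square of the norm written as `⟨(I + kΔ) g, g⟩`. -/
theorem stmt_16 {H : Type*} [NormedAddCommGroup H] [InnerProductSpace ℝ H] [CompleteSpace H]
    (P : H →L[ℝ] H) (hPsa : IsSelfAdjoint P) (a : ℝ) (ha : -1 < a)
    (hspec : spectrum ℝ P ⊆ Set.Ioc a 1) :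
    ∀ t : ℕ, ∃ C : ℝ, 0 < C ∧ ∀ k : ℕ, 1 ≤ k → ∀ h : H,
      (1 / (k : ℝ)) * ∑ l ∈ Finset.Icc 1 k, (l : ℝ) ^ (2 * (1 + t)) *
          (@inner ℝ H _
            (((1 + (k : ℝ) • (1 - P)) * ((1 - P) ^ (1 + t) * P ^ (l - 1))) h)
            (((1 - P) ^ (1 + t) * P ^ (l - 1)) h))
        ≤ C * ‖h‖ ^ 2 := by
  intro t
  set a' : ℝ := min a 0 with ha'def
  have ha' : -1 < a' := lt_min ha (by norm_num)
  have ha'0 : a' ≤ 0 := min_le_right _ _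
  have hε : (0:ℝ) < 1 + a' := by linarith
  set Cb : ℝ := ((2*t+1).factorial : ℝ) / (1 + a') ^ (2*t+2)
      + ((2*t+2).factorial : ℝ) / (1 + a') ^ (2*t+3) with hCb
  have hCbpos : 0 < Cb := by positivity
  refine ⟨Cb, hCbpos, ?_⟩
  intro k hk h
  have hsub : spectrum ℝ P ⊆ Set.Icc a' 1 := by
    intro x hx
    obtain ⟨hx1, hx2⟩ := hspec hx
    exact ⟨le_trans (min_le_left _ _) (le_of_lt hx1), hx2⟩
  have hSne : (Set.Icc a' 1).Nonempty := ⟨1, by constructor <;> linarith⟩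
  -- the polynomial
  set Mp : ℝ[X] := 1 + Polynomial.C (k:ℝ) * (1 - X) with hMp
  set G : ℝ[X] := Polynomial.C (1/(k:ℝ)) *
      ∑ l ∈ Finset.Icc 1 k, Polynomial.C ((l:ℝ) ^ (2*(1+t))) *
        (Mp * ((1 - X) ^ (1+t) * X ^ (l-1)) ^ 2) with hG
  -- operator identities
  have hMop : aeval P Mp = 1 + (k:ℝ) • (1 - P) := by
    rw [hMp]
    simp only [map_add, map_mul, map_sub, map_one, aeval_X, aeval_C]
    rw [← Algebra.smul_def]
  have hpop : ∀ l : ℕ, aeval P ((1 - X : ℝ[X]) ^ (1+t) * X ^ (l-1))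
      = (1 - P) ^ (1+t) * P ^ (l-1) := by
    intro l
    simp only [map_mul, map_pow, map_sub, map_one, aeval_X]
  -- identification of the LHS with ⟪aeval P G h, h⟫
  have hLHS : (1 / (k : ℝ)) * ∑ l ∈ Finset.Icc 1 k, (l : ℝ) ^ (2 * (1 + t)) *
          (@inner ℝ H _
            (((1 + (k : ℝ) • (1 - P)) * ((1 - P) ^ (1 + t) * P ^ (l - 1))) h)
            (((1 - P) ^ (1 + t) * P ^ (l - 1)) h))
      = @inner ℝ H _ (aeval P G h) h := by
    rw [hG, map_mul, aeval_C, map_sum, ← Algebra.smul_def, smul_apply,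
      real_inner_smul_left]
    congr 1
    rw [sum_apply, sum_inner]
    apply Finset.sum_congr rfl
    intro l _
    rw [map_mul, aeval_C, ← Algebra.smul_def, smul_apply, real_inner_smul_left]
    congr 1
    rw [← inner_term_eq hPsa Mp ((1 - X : ℝ[X]) ^ (1+t) * X ^ (l-1)) h, hMop, hpop]
  rw [hLHS]
  -- eval bound
  apply inner_aeval_le hPsa hSne hsub
  intro x hx
  have heval : G.eval x = (1 / (k:ℝ)) * ∑ l ∈ Finset.Icc 1 k, (l : ℝ) ^ (2 * (1 + t)) *
      ((1 + (k:ℝ) * (1 - x)) * ((1 - x) ^ (1 + t) * x ^ (l - 1)) ^ 2) := by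
    rw [hG]
    simp only [eval_mul, eval_C, eval_finset_sum, eval_add, eval_sub, eval_pow, eval_X,
      eval_one, hMp]
  rw [heval]
  exact scalar_bound t k hk ha' ha'0 hx
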